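/- Let X = {v_1, ..., v_s} ⊂ ℝ^d be a finite non-spherical set. Then there exist real numbers c_1, ..., c_s, not all zero, and a real B ≠ 0, such that every isometric copy {x_1, ..., x_s} of X in any ℝ^n (with x_j the image of v_j) satisfies ∑_{j=1}^s c_j |x_j|^2 = B. -/

import Mathlib

/-- A finite set is spherical if it embeds isometrically into a sphere of some dimension. -/
def Spherical {d : ℕ} (X : Set (EuclideanSpace ℝ (Fin d))) : Prop :=
  ∃ (N : ℕ) (f : EuclideanSpace ℝ (Fin d) → EuclideanSpace ℝ (Fin N))
    (c : EuclideanSpace ℝ (Fin N)) (ρ : ℝ),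
    (∀ x ∈ X, ∀ y ∈ X, dist (f x) (f y) = dist x y) ∧ ∀ x ∈ X, dist (f x) c = ρ

lemma inner_eq_aux {n : ℕ} (a b : EuclideanSpace ℝ (Fin n)) :
    (inner ℝ a b : ℝ) = (‖a‖ ^ 2 + ‖b‖ ^ 2 - ‖a - b‖ ^ 2) / 2 := by
  have := norm_sub_sq_real a b; linarith

lemma exists_affine_dep (d s : ℕ) (v : Fin s → EuclideanSpace ℝ (Fin d))
    (hX : ¬ Spherical (Set.range v)) :
    ∃ c : Fin s → ℝ, ∑ j, c j = 0 ∧ ∑ j, c j • v j = 0 ∧ ∑ j, c j * ‖v j‖ ^ 2 ≠ 0 := by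
  by_contra h
  push_neg at h
  apply hX
  -- generators of the space of affine functionals evaluated on v
  set g : (Fin d ⊕ Unit) → EuclideanSpace ℝ (Fin s) :=
    fun t => match t with
      | Sum.inl i => (WithLp.toLp 2 fun j => v j i)
      | Sum.inr _ => (WithLp.toLp 2 fun _ => (1 : ℝ)) with hg
  set K : Submodule ℝ (EuclideanSpace ℝ (Fin s)) := Submodule.span ℝ (Set.range g) with hK
  set m : EuclideanSpace ℝ (Fin s) := (WithLp.toLp 2 fun j => ‖v j‖ ^ 2) with hm
  have hmem : m ∈ K := by
    rw [← Submodule.orthogonal_orthogonal K]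
    intro c hc
    -- c is orthogonal to each generator
    have hgen : ∀ t, (inner ℝ (g t) c : ℝ) = 0 := fun t =>
      hc (g t) (Submodule.subset_span (Set.mem_range_self t))
    have hc0 : ∑ j, c j = 0 := by
      have := hgen (Sum.inr ())
      simpa [hg, PiLp.inner_apply, RCLike.inner_apply] using this
    have hcv : ∑ j, c j • v j = 0 := by
      apply PiLp.ext
      intro i
      have h1 := hgen (Sum.inl i)
      simp only [hg, PiLp.inner_apply, RCLike.inner_apply, conj_trivial] at h1
      have h2 : (EuclideanSpace.proj i) (∑ j, c j • v j) = ∑ j, c j * v j i := by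
        rw [map_sum]; simp
      have h3 : (∑ j, c j • v j) i = ∑ j, c j * v j i := h2
      rw [h3]
      calc ∑ j, c j * v j i = ∑ j, v j i * c j :=
            Finset.sum_congr rfl fun j _ => mul_comm _ _
        _ = 0 := (Finset.sum_congr rfl fun j _ => mul_comm _ _).trans h1
    have := h c hc0 hcv
    simp only [PiLp.inner_apply, RCLike.inner_apply, conj_trivial]
    calc ∑ j, m j * c j = ∑ j, c j * ‖v j‖ ^ 2 := Finset.sum_congr rfl fun j _ => mul_comm _ _
      _ = 0 := this
  rw [hK, Submodule.mem_span_range_iff_exists_fun] at hmem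
  obtain ⟨w, hw⟩ := hmem
  set a : EuclideanSpace ℝ (Fin d) := (WithLp.toLp 2 fun i => w (Sum.inl i)) with ha
  set b : ℝ := w (Sum.inr ()) with hb
  have key : ∀ j, ‖v j‖ ^ 2 = (inner ℝ a (v j) : ℝ) + b := by
    intro j
    have e1 : (EuclideanSpace.proj j) (∑ t, w t • g t) = ∑ t, w t * g t j := by
      rw [map_sum]; simp
    rw [hw] at e1
    have e2 : ‖v j‖ ^ 2 = ∑ t, w t * g t j := by rw [← e1]; simp [hm]
    rw [e2, Fintype.sum_sum_type]
    simp only [hg]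
    rw [PiLp.inner_apply]
    simp [ha, hb, mul_comm]
  set ctr : EuclideanSpace ℝ (Fin d) := (1/2 : ℝ) • a with hctr
  have hdist : ∀ j, dist (v j) ctr = Real.sqrt (b + ‖ctr‖ ^ 2) := by
    intro j
    have hsq : dist (v j) ctr ^ 2 = b + ‖ctr‖ ^ 2 := by
      rw [dist_eq_norm, norm_sub_sq_real, key j]
      have : (inner ℝ (v j) ctr : ℝ) = (1/2) * inner ℝ a (v j) := by
        rw [hctr, real_inner_smul_right, real_inner_comm]
      rw [this]; ring
    rw [← hsq, Real.sqrt_sq dist_nonneg]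
  exact ⟨d, id, ctr, Real.sqrt (b + ‖ctr‖ ^ 2), fun x _ y _ => rfl,
    by rintro x ⟨j, rfl⟩; exact hdist j⟩

lemma sum_smul_norm_sq {s n : ℕ} (c : Fin s → ℝ) (y : Fin s → EuclideanSpace ℝ (Fin n))
    (j₀ : Fin s) (hc : ∑ j, c j = 0) (hy : ∑ j, c j • y j = 0) :
    ∑ j, c j * ‖y j - y j₀‖ ^ 2 = ∑ j, c j * ‖y j‖ ^ 2 := by
  have h1 : (inner ℝ (∑ j, c j • y j) (y j₀) : ℝ) = ∑ j, c j * inner ℝ (y j) (y j₀) := by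
    rw [sum_inner]; exact Finset.sum_congr rfl fun j _ => real_inner_smul_left _ _ _
  rw [hy, inner_zero_left] at h1
  calc ∑ j, c j * ‖y j - y j₀‖ ^ 2
      = ∑ j, (c j * ‖y j‖ ^ 2 - 2 * (c j * inner ℝ (y j) (y j₀)) + c j * ‖y j₀‖ ^ 2) := by
        refine Finset.sum_congr rfl fun j _ => ?_
        rw [norm_sub_sq_real]; ring
    _ = ∑ j, c j * ‖y j‖ ^ 2 - 2 * (∑ j, c j * inner ℝ (y j) (y j₀))
          + (∑ j, c j) * ‖y j₀‖ ^ 2 := by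
        rw [Finset.sum_add_distrib, Finset.sum_sub_distrib, ← Finset.mul_sum, Finset.sum_mul]
    _ = ∑ j, c j * ‖y j‖ ^ 2 := by rw [← h1, hc]; ring

lemma gram_zero {s n m : ℕ} (c : Fin s → ℝ) (z : Fin s → EuclideanSpace ℝ (Fin n))
    (w : Fin s → EuclideanSpace ℝ (Fin m))
    (hgr : ∀ i k, (inner ℝ (z i) (z k) : ℝ) = inner ℝ (w i) (w k))
    (hw : ∑ j, c j • w j = 0) : ∑ j, c j • z j = 0 := by
  have key : (inner ℝ (∑ j, c j • z j) (∑ j, c j • z j) : ℝ)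
      = inner ℝ (∑ j, c j • w j) (∑ j, c j • w j) := by
    simp only [sum_inner, inner_sum, real_inner_smul_left, real_inner_smul_right]
    exact Finset.sum_congr rfl fun i _ => Finset.sum_congr rfl fun k _ => by rw [hgr k i]
  rw [hw, inner_zero_right] at key
  exact inner_self_eq_zero.mp key

/-- EGMRSS Lemma 14 -/
theorem stmt_12 (d s : ℕ) (v : Fin s → EuclideanSpace ℝ (Fin d))
    (hinj : Function.Injective v) (hX : ¬ Spherical (Set.range v)) :
    ∃ (c : Fin s → ℝ) (B : ℝ), c ≠ 0 ∧ B ≠ 0 ∧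
      ∀ (n : ℕ) (x : Fin s → EuclideanSpace ℝ (Fin n)),
        (∀ i j, dist (x i) (x j) = dist (v i) (v j)) →
        ∑ j, c j * ‖x j‖ ^ 2 = B := by
  obtain ⟨c, hc0, hcv, hB⟩ := exists_affine_dep d s v hX
  refine ⟨c, ∑ j, c j * ‖v j‖ ^ 2, ?_, hB, ?_⟩
  · rintro rfl; simp at hB
  intro n x hdist
  have hs : s ≠ 0 := by rintro rfl; simp at hB
  obtain ⟨j₀⟩ : Nonempty (Fin s) := ⟨⟨0, Nat.pos_of_ne_zero hs⟩⟩
  have hnorm : ∀ i k, ‖x i - x k‖ = ‖v i - v k‖ := fun i k => by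
    rw [← dist_eq_norm, ← dist_eq_norm, hdist]
  have hwsum : ∑ j, c j • (v j - v j₀) = 0 := by
    simp only [smul_sub, Finset.sum_sub_distrib, hcv, ← Finset.sum_smul, hc0, zero_smul,
      sub_zero]
  have hgr : ∀ i k, (inner ℝ (x i - x j₀) (x k - x j₀) : ℝ)
      = inner ℝ (v i - v j₀) (v k - v j₀) := by
    intro i k
    rw [inner_eq_aux, inner_eq_aux, sub_sub_sub_cancel_right, sub_sub_sub_cancel_right,
      hnorm i j₀, hnorm k j₀, hnorm i k]
  have hzsum : ∑ j, c j • (x j - x j₀) = 0 := gram_zero c _ _ hgr hwsum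
  have hxsum : ∑ j, c j • x j = 0 := by
    have := hzsum
    simp only [smul_sub, Finset.sum_sub_distrib, ← Finset.sum_smul, hc0, zero_smul,
      sub_zero] at this
    exact this
  calc ∑ j, c j * ‖x j‖ ^ 2 = ∑ j, c j * ‖x j - x j₀‖ ^ 2 :=
        (sum_smul_norm_sq c x j₀ hc0 hxsum).symm
    _ = ∑ j, c j * ‖v j - v j₀‖ ^ 2 :=
        Finset.sum_congr rfl fun j _ => by rw [hnorm j j₀]
    _ = ∑ j, c j * ‖v j‖ ^ 2 := sum_smul_norm_sq c v j₀ hc0 hcv
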